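/- Let A be a d×d binary (adjacency) matrix, X_A the associated one-sided Markov shift and T_A the hom tree-shift of X_A. Then X_A is topologically mixing if and only if T_A is uniform CPC-block gluing (CPC UBG). -/

import Mathlib

namespace TreeShiftPaper

/-- Words over the alphabet `Σ = {0, …, k-1}`: nodes of the `k`-tree. -/
abbrev Word (k : ℕ) := List (Fin k)

variable {k : ℕ} {A : Type*}

/-- A set of words is prefix-closed if it contains every prefix of each of its elements. -/
def PrefixClosed (S : Set (Word k)) : Prop :=
  ∀ w ∈ S, ∀ v : Word k, v <+: w → v ∈ S

/-- The pattern with support `S` and labels `u` appears in the labeled tree `t`. -/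
def PatternAppears (t : Word k → A) (S : Set (Word k)) (u : Word k → A) : Prop :=
  ∃ s : Word k, ∀ w ∈ S, t (s ++ w) = u w

/-- The set of labeled trees avoiding every pattern of the forbidden family `F`. -/
def treeShiftOf (F : Set ((Set (Word k)) × (Word k → A))) : Set (Word k → A) :=
  {t | ∀ p ∈ F, ¬ PatternAppears t p.1 p.2}

/-- `T` is a tree-shift: it is defined by some forbidden set of patterns
(each with finite prefix-closed support). -/
def IsTreeShift (T : Set (Word k → A)) : Prop :=
  ∃ F : Set ((Set (Word k)) × (Word k → A)),
    (∀ p ∈ F, p.1.Finite ∧ PrefixClosed p.1) ∧ T = treeShiftOf F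

/-- `T` is a tree-shift of finite type: the forbidden set can be chosen finite. -/
def IsTreeSFT (T : Set (Word k → A)) : Prop :=
  ∃ F : Set ((Set (Word k)) × (Word k → A)),
    F.Finite ∧ (∀ p ∈ F, p.1.Finite ∧ PrefixClosed p.1) ∧ T = treeShiftOf F

/-- The finite word `w` occurs in the one-sided sequence `x` at position `i`. -/
def OccursAt (x : ℕ → A) (i : ℕ) (w : List A) : Prop :=
  ∀ j : Fin w.length, x (i + (j : ℕ)) = w.get j

/-- The one-sided shift space defined by the forbidden set of words `F`. -/
def shiftOf (F : Set (List A)) : Set (ℕ → A) :=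
  {x | ∀ w ∈ F, ∀ i : ℕ, ¬ OccursAt x i w}

/-- `X` is a one-sided shift space. -/
def IsShift (X : Set (ℕ → A)) : Prop := ∃ F : Set (List A), X = shiftOf F

/-- `X` is a one-sided shift of finite type. -/
def IsSFT (X : Set (ℕ → A)) : Prop :=
  ∃ F : Set (List A), F.Finite ∧ X = shiftOf F

/-- A chain: an infinite path in the tree starting at the root. -/
def IsChain (c : ℕ → Word k) : Prop :=
  c 0 = [] ∧ ∀ n : ℕ, ∃ i : Fin k, c (n + 1) = c n ++ [i]

/-- The hom tree-shift associated with a one-sided shift space `X`: labeled trees whose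
projection along every chain lies in `X`. -/
def homTree (k : ℕ) (X : Set (ℕ → A)) : Set (Word k → A) :=
  {t | ∀ c : ℕ → Word k, IsChain c → (fun n => t (c n)) ∈ X}

/-- `Y` is a sofic one-sided shift: image of an SFT under a sliding block code induced
by an `n`-block map. -/
def IsSofic (Y : Set (ℕ → A)) : Prop :=
  ∃ (B : Type) (_ : Fintype B) (X : Set (ℕ → B)) (n : ℕ) (f : (ℕ → B) → A),
    IsSFT X ∧ (∀ u v : ℕ → B, (∀ j < n, u j = v j) → f u = f v) ∧
    (fun x : ℕ → B => fun i => f (fun j => x (i + j))) '' X = Y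

/-- `T` is a sofic tree-shift: image of a tree-SFT under the map induced by an
`n`-block map. -/
def IsSoficTree (T : Set (Word k → A)) : Prop :=
  ∃ (B : Type) (_ : Fintype B) (T' : Set (Word k → B)) (n : ℕ) (g : (Word k → B) → A),
    IsTreeSFT T' ∧
    (∀ u v : Word k → B, (∀ w : Word k, w.length ≤ n → u w = v w) → g u = g v) ∧
    (fun t : Word k → B => fun w => g (fun z => t (w ++ z))) '' T' = T

/-- The Markov tree-shift determined by `k` binary `d × d` transition matrices. -/
def markovTree (k d : ℕ) (M : Fin k → Matrix (Fin d) (Fin d) Bool) :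
    Set (Word k → Fin d) :=
  {t | ∀ w : Word k, ∀ i : Fin k, M i (t w) (t (w ++ [i])) = true}

/-- The one-sided Markov (vertex) shift determined by a binary `d × d` matrix. -/
def markovShift (d : ℕ) (M : Matrix (Fin d) (Fin d) Bool) : Set (ℕ → Fin d) :=
  {x | ∀ i : ℕ, M (x i) (x (i + 1)) = true}

/-- The pattern with support `S` and labels `u` is admissible in `T`. -/
def AdmissiblePattern (T : Set (Word k → A)) (S : Set (Word k)) (u : Word k → A) : Prop :=
  ∃ t ∈ T, ∃ s : Word k, ∀ w ∈ S, t (s ++ w) = u w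

/-- The `n`-block `u` (a labeling of `Δ_n`) is admissible in `T`. -/
def AdmissibleBlock (T : Set (Word k → A)) (n : ℕ) (u : Word k → A) : Prop :=
  ∃ t ∈ T, ∃ s : Word k, ∀ w : Word k, w.length ≤ n → t (s ++ w) = u w

/-- Word distance on the `k`-tree:
`d(x,y) = |x| + |y| - 2 · max{|w| : w` a common prefix of `x` and `y}`. -/
noncomputable def wordDist (x y : Word k) : ℕ :=
  x.length + y.length - 2 * sSup {m : ℕ | ∃ w : Word k, w <+: x ∧ w <+: y ∧ w.length = m}

/-- The boundary `∂S = {w ∈ S : wΣ ∩ S = ∅}` of a support `S`. -/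
def boundary (S : Set (Word k)) : Set (Word k) :=
  {w | w ∈ S ∧ ∀ i : Fin k, w ++ [i] ∉ S}

/-- A complete prefix code: a finite prefix set such that every word of length at least
`max_{z ∈ P} |z|` has a prefix in `P`. -/
def IsCPC (P : Set (Word k)) : Prop :=
  P.Finite ∧ (∀ x ∈ P, ∀ y ∈ P, x <+: y → x = y) ∧
  ∀ w : Word k, (∀ z ∈ P, z.length ≤ w.length) → ∃ x ∈ P, x <+: w

/-- Strong irreducibility with gap `N`. -/
def SIGap (T : Set (Word k → A)) (N : ℕ) : Prop :=
  ∀ (Su Sv : Set (Word k)) (u v : Word k → A),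
    Su.Finite → PrefixClosed Su → Sv.Finite → PrefixClosed Sv →
    AdmissiblePattern T Su u → AdmissiblePattern T Sv v →
    ∀ w : Word k, (∀ h ∈ Su, N ≤ wordDist w h) →
      ∃ t ∈ T, (∀ z ∈ Su, t z = u z) ∧ ∀ z ∈ Sv, t (w ++ z) = v z

/-- `T` is strongly irreducible (SI). -/
def SI (T : Set (Word k → A)) : Prop := ∃ N : ℕ, SIGap T N

/-- `T` is block gluing (BG). -/
def BG (T : Set (Word k → A)) : Prop :=
  ∃ N : ℕ, ∀ (n m : ℕ) (u v : Word k → A),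
    AdmissibleBlock T n u → AdmissibleBlock T m v →
    ∀ w : Word k, N + n ≤ w.length →
      ∃ t ∈ T, (∀ z : Word k, z.length ≤ n → t z = u z) ∧
        ∀ z : Word k, z.length ≤ m → t (w ++ z) = v z

/-- `T` is topologically mixing (TM). -/
def TM (T : Set (Word k → A)) : Prop :=
  ∀ H₁ H₂ : Set (Word k), H₁.Finite → H₂.Finite →
    ∃ N : ℕ, ∀ t₁ ∈ T, ∀ t₂ ∈ T, ∀ w : Word k, (∀ h ∈ H₁, N ≤ wordDist w h) →
      ∃ t ∈ T, (∀ z ∈ H₁, t z = t₁ z) ∧ ∀ z ∈ H₂, t (w ++ z) = t₂ z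

/-- `T` is irreducible (IR). -/
def IR (T : Set (Word k → A)) : Prop :=
  ∀ (n m : ℕ) (u v : Word k → A),
    AdmissibleBlock T n u → AdmissibleBlock T m v →
    ∃ w : Word k, n < w.length ∧
      ∃ t ∈ T, (∀ z : Word k, z.length ≤ n → t z = u z) ∧
        ∀ z : Word k, z.length ≤ m → t (w ++ z) = v z

/-- `T` is CPC-strongly irreducible via the prefix set `P`. -/
def CPCSIWith (T : Set (Word k → A)) (P : Set (Word k)) : Prop :=
  ∀ (Su Sv : Set (Word k)) (u v : Word k → A),
    Su.Finite → PrefixClosed Su → Sv.Finite → PrefixClosed Sv →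
    AdmissiblePattern T Su u → AdmissiblePattern T Sv v →
    ∃ t ∈ T, (∀ z ∈ Su, t z = u z) ∧
      ∀ w ∈ boundary Su, ∀ z ∈ P, ∀ y ∈ Sv, t (w ++ z ++ y) = v y

/-- `T` is CPC-strongly irreducible (CPC SI). -/
def CPCSI (T : Set (Word k → A)) : Prop := ∃ P : Set (Word k), IsCPC P ∧ CPCSIWith T P

/-- `T` is uniform CPC-strongly irreducible (CPC USI): CPC SI with `P = Σ^N`. -/
def CPCUSI (T : Set (Word k → A)) : Prop :=
  ∃ N : ℕ, CPCSIWith T {z : Word k | z.length = N}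

/-- `T` is CPC-block gluing via the prefix set `P`. -/
def CPCBGWith (T : Set (Word k → A)) (P : Set (Word k)) : Prop :=
  ∀ (n m : ℕ) (u v : Word k → A),
    AdmissibleBlock T n u → AdmissibleBlock T m v →
    ∃ t ∈ T, (∀ z : Word k, z.length ≤ n → t z = u z) ∧
      ∀ w : Word k, w.length = n → ∀ z ∈ P, ∀ y : Word k, y.length ≤ m →
        t (w ++ z ++ y) = v y

/-- `T` is CPC-block gluing (CPC BG). -/
def CPCBG (T : Set (Word k → A)) : Prop := ∃ P : Set (Word k), IsCPC P ∧ CPCBGWith T P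

/-- `T` is uniform CPC-block gluing (CPC UBG): CPC BG with `P = Σ^N`. -/
def CPCUBG (T : Set (Word k → A)) : Prop :=
  ∃ N : ℕ, CPCBGWith T {z : Word k | z.length = N}

/-- `T` is CPC-irreducible (CPC IR). -/
def CPCIR (T : Set (Word k → A)) : Prop :=
  ∀ (n m : ℕ) (u v : Word k → A),
    AdmissibleBlock T n u → AdmissibleBlock T m v →
    ∃ P : Set (Word k), IsCPC P ∧ (∀ z ∈ P, n + 1 ≤ z.length) ∧
      ∃ t ∈ T, (∀ z : Word k, z.length ≤ n → t z = u z) ∧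
        ∀ w ∈ P, ∀ y : Word k, y.length ≤ m → t (w ++ y) = v y

/-- The finite word `u` is admissible in the one-sided shift space `X`. -/
def WordAdmissible (X : Set (ℕ → A)) (u : List A) : Prop :=
  ∃ x ∈ X, ∃ i : ℕ, OccursAt x i u

/-- The one-sided shift space `X` is topologically mixing. -/
def MixingShift (X : Set (ℕ → A)) : Prop :=
  ∀ u v : List A, WordAdmissible X u → WordAdmissible X v →
    ∃ N : ℕ, ∀ n ≥ N, ∃ x ∈ X, OccursAt x 0 u ∧ OccursAt x (u.length + n) v

/-- The one-sided shift space `X` is transitive (irreducible). -/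
def TransitiveShift (X : Set (ℕ → A)) : Prop :=
  ∀ u v : List A, WordAdmissible X u → WordAdmissible X v →
    ∃ x ∈ X, ∃ n : ℕ, u.length ≤ n ∧ OccursAt x 0 u ∧ OccursAt x n v

end TreeShiftPaper

namespace TreeShiftPaper

section Aux

variable {k d : ℕ} {M : Matrix (Fin d) (Fin d) Bool}

/-- An infinite chain extending the word `s`, padded by `i0`. -/
def extFn (i0 : Fin k) (s : Word k) : ℕ → Word k
  | 0 => []
  | j + 1 => extFn i0 s j ++ [if h : j < s.length then s.get ⟨j, h⟩ else i0]

lemma extFn_chain (i0 : Fin k) (s : Word k) : IsChain (extFn i0 s) :=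
  ⟨rfl, fun _ => ⟨_, rfl⟩⟩

lemma extFn_take (i0 : Fin k) (s : Word k) (j : ℕ) (hj : j ≤ s.length) :
    extFn i0 s j = s.take j := by
  induction j with
  | zero => simp [extFn]
  | succ j ih =>
    rw [extFn, ih (by omega), dif_pos (show j < s.length by omega)]
    rw [← List.take_concat_get (by omega : j < s.length)]
    simp

lemma extFn_self (i0 : Fin k) (s : Word k) : extFn i0 s s.length = s := by
  rw [extFn_take i0 s _ le_rfl, List.take_length]

/-- A symbol is admissible in the Markov shift. -/
def AdmSym (d : ℕ) (M : Matrix (Fin d) (Fin d) Bool) (a : Fin d) : Prop :=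
  ∃ x ∈ markovShift d M, ∃ i : ℕ, x i = a

lemma chain_length {c : ℕ → Word k} (hc : IsChain c) : ∀ j, (c j).length = j := by
  intro j
  induction j with
  | zero => rw [hc.1]; rfl
  | succ j ih => obtain ⟨i, hi⟩ := hc.2 j; rw [hi]; simp [ih]

lemma shift_mem {x : ℕ → Fin d} (hx : x ∈ markovShift d M) (i : ℕ) :
    (fun j => x (i + j)) ∈ markovShift d M := by
  intro j
  have := hx (i + j)
  simpa [Nat.add_assoc] using this

lemma mem_homTree_iff (hk1 : 0 < k) (t : Word k → Fin d) :
    t ∈ homTree k (markovShift d M) ↔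
      ∀ w : Word k, ∀ i : Fin k, M (t w) (t (w ++ [i])) = true := by
  constructor
  · intro ht w i
    have hx := ht _ (extFn_chain (⟨0, hk1⟩ : Fin k) (w ++ [i]))
    have h := hx w.length
    dsimp only at h
    rw [extFn_take _ _ _ (by simp)] at h
    rw [List.take_left] at h
    rw [show w.length + 1 = (w ++ [i]).length by simp] at h
    rwa [extFn_self] at h
  · intro h c hc j
    obtain ⟨i, hi⟩ := hc.2 j
    simp only [hi]
    exact h _ _

lemma adm_of_mem (hk1 : 0 < k) {t : Word k → Fin d}
    (ht : t ∈ homTree k (markovShift d M)) (w : Word k) : AdmSym d M (t w) := by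
  refine ⟨fun j => t (extFn (⟨0, hk1⟩ : Fin k) w j),
    ht _ (extFn_chain _ w), w.length, ?_⟩
  show t (extFn (⟨0, hk1⟩ : Fin k) w w.length) = t w
  rw [extFn_self]

lemma adm_succ_exists {a : Fin d} (ha : AdmSym d M a) :
    ∃ b : Fin d, M a b = true ∧ AdmSym d M b := by
  obtain ⟨x, hx, i, hi⟩ := ha
  exact ⟨x (i + 1), by rw [← hi]; exact hx i, x, hx, i + 1, rfl⟩

open Classical in
/-- A successor function for admissible symbols. -/
noncomputable def succF (d : ℕ) (M : Matrix (Fin d) (Fin d) Bool) (a : Fin d) : Fin d :=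
  if h : ∃ b : Fin d, M a b = true ∧ AdmSym d M b then h.choose else a

lemma succF_spec {a : Fin d} (ha : AdmSym d M a) :
    M a (succF d M a) = true ∧ AdmSym d M (succF d M a) := by
  have h := adm_succ_exists ha
  rw [succF, dif_pos h]
  exact h.choose_spec

lemma succF_iter_adm {a : Fin d} (ha : AdmSym d M a) :
    ∀ j, AdmSym d M ((succF d M)^[j] a) := by
  intro j
  induction j with
  | zero => exact ha
  | succ j ih => rw [Function.iterate_succ_apply']; exact (succF_spec ih).2

lemma occurs_single {x : ℕ → Fin d} {i : ℕ} {a : Fin d} :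
    OccursAt x i [a] ↔ x i = a := by
  constructor
  · intro h
    have := h ⟨0, by simp⟩
    simpa using this
  · intro h j
    have h1 : (j : ℕ) < 1 := by simpa using j.isLt
    have hj : j = ⟨0, by simp⟩ := Fin.ext (by simp only [Fin.val_mk]; omega)
    subst hj
    simpa using h

lemma adm_iff_word {a : Fin d} :
    AdmSym d M a ↔ WordAdmissible (markovShift d M) [a] := by
  constructor
  · rintro ⟨x, hx, i, hi⟩
    exact ⟨x, hx, i, occurs_single.mpr hi⟩
  · rintro ⟨x, hx, i, hi⟩
    exact ⟨x, hx, i, occurs_single.mp hi⟩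

lemma mixing_symbols (hmix : MixingShift (markovShift d M)) :
    ∃ N : ℕ, ∀ a b : Fin d, AdmSym d M a → AdmSym d M b → ∀ n, N ≤ n →
      ∃ x ∈ markovShift d M, x 0 = a ∧ x (1 + n) = b := by
  classical
  refine ⟨Finset.univ.sup (fun p : Fin d × Fin d =>
    if h : WordAdmissible (markovShift d M) [p.1] ∧
        WordAdmissible (markovShift d M) [p.2] then
      (hmix [p.1] [p.2] h.1 h.2).choose else 0), ?_⟩
  intro a b ha hb n hn
  have ha' := adm_iff_word.mp ha
  have hb' := adm_iff_word.mp hb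
  have h0 := Finset.le_sup (f := fun p : Fin d × Fin d =>
    if h : WordAdmissible (markovShift d M) [p.1] ∧
        WordAdmissible (markovShift d M) [p.2] then
      (hmix [p.1] [p.2] h.1 h.2).choose else 0) (Finset.mem_univ (a, b))
  have hle := le_trans h0 hn
  dsimp only at hle
  rw [dif_pos ⟨ha', hb'⟩] at hle
  obtain ⟨x, hx, h1, h2⟩ := (hmix [a] [b] ha' hb').choose_spec n hle
  exact ⟨x, hx, occurs_single.mp h1, occurs_single.mp (by simpa using h2)⟩


lemma backward_dir (hk : 2 ≤ k) (h : CPCUBG (homTree k (markovShift d M))) :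
    MixingShift (markovShift d M) := by
  obtain ⟨N, hP⟩ := h
  rintro u v ⟨xu, hxu, iu, hou⟩ ⟨xv, hxv, iv, hov⟩
  refine ⟨N, fun n hn => ?_⟩
  set D := u.length + n - N with hD
  have hDN : D + N = u.length + n := by omega
  have huD : u.length ≤ D := by omega
  have hblock : ∀ (x : ℕ → Fin d), x ∈ markovShift d M → ∀ i : ℕ,
      (fun w : Word k => x (i + w.length)) ∈ homTree k (markovShift d M) := by
    intro x hx i c hc
    have he : (fun j => (fun w : Word k => x (i + w.length)) (c j))
        = fun j => x (i + j) := by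
      funext j; simp [chain_length hc j]
    rw [he]
    exact shift_mem hx i
  have hU : AdmissibleBlock (homTree k (markovShift d M)) D
      (fun w : Word k => xu (iu + w.length)) :=
    ⟨_, hblock xu hxu iu, [], fun w _ => rfl⟩
  have hV : AdmissibleBlock (homTree k (markovShift d M)) v.length
      (fun w : Word k => xv (iv + w.length)) :=
    ⟨_, hblock xv hxv iv, [], fun w _ => rfl⟩
  obtain ⟨t, htT, h1, h2⟩ := hP D v.length _ _ hU hV
  have hk0 : 0 < k := by omega
  set z0 : Fin k := ⟨0, hk0⟩ with hz0
  have hrep : IsChain (fun j => List.replicate j z0) :=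
    ⟨rfl, fun j => ⟨z0, List.replicate_succ'⟩⟩
  refine ⟨fun j => t (List.replicate j z0), htT _ hrep, ?_, ?_⟩
  · intro j
    have hjl : (j : ℕ) < u.length := j.isLt
    simp only [Nat.zero_add]
    have hlen : (List.replicate (j : ℕ) z0).length ≤ D := by
      rw [List.length_replicate]; omega
    rw [h1 _ hlen]
    simpa using hou j
  · intro j
    have hjl : (j : ℕ) < v.length := j.isLt
    have hsplit : List.replicate (u.length + n + (j : ℕ)) z0
        = List.replicate D z0 ++ List.replicate N z0 ++ List.replicate (j : ℕ) z0 := by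
      rw [show u.length + n + (j : ℕ) = D + N + (j : ℕ) by omega,
        List.replicate_add, List.replicate_add]
    show t (List.replicate (u.length + n + (j : ℕ)) z0) = v.get j
    rw [hsplit, h2 _ (by simp) _ (by simp) _ (by rw [List.length_replicate]; omega)]
    simpa using hov j

lemma forward_dir (hk : 2 ≤ k) (hmix : MixingShift (markovShift d M)) :
    CPCUBG (homTree k (markovShift d M)) := by
  classical
  obtain ⟨N₀, hN₀⟩ := mixing_symbols hmix
  have hk0 : 0 < k := by omega
  refine ⟨N₀ + 1, ?_⟩
  intro n m u v hu hv
  obtain ⟨tu, htu, su, hsu⟩ := hu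
  obtain ⟨tv, htv, sv, hsv⟩ := hv
  set N := N₀ + 1 with hNdef
  have hN1 : 1 ≤ N := by omega
  have hadm_u : ∀ w : Word k, w.length ≤ n → AdmSym d M (u w) := by
    intro w hw; rw [← hsu w hw]; exact adm_of_mem hk0 htu _
  have hadm_v : ∀ y : Word k, y.length ≤ m → AdmSym d M (v y) := by
    intro y hy; rw [← hsv y hy]; exact adm_of_mem hk0 htv _
  have hM_u : ∀ (w : Word k) (i : Fin k), w.length < n →
      M (u w) (u (w ++ [i])) = true := by
    intro w i hw
    have h := (mem_homTree_iff hk0 tu).mp htu (su ++ w) i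
    rwa [List.append_assoc, hsu w (le_of_lt hw),
      hsu (w ++ [i]) (by simp; omega)] at h
  have hM_v : ∀ (y : Word k) (i : Fin k), y.length < m →
      M (v y) (v (y ++ [i])) = true := by
    intro y i hy
    have h := (mem_homTree_iff hk0 tv).mp htv (sv ++ y) i
    rwa [List.append_assoc, hsv y (le_of_lt hy),
      hsv (y ++ [i]) (by simp; omega)] at h
  have hb : AdmSym d M (v []) := hadm_v [] (by simp)
  set pth : Fin d → ℕ → Fin d := fun a =>
    if h : AdmSym d M a then (hN₀ a (v []) h hb N₀ le_rfl).choose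
    else fun _ => a with hpth
  have pth_spec : ∀ a : Fin d, AdmSym d M a →
      pth a ∈ markovShift d M ∧ pth a 0 = a ∧ pth a N = v [] := by
    intro a ha
    rw [hpth]; dsimp only; rw [dif_pos ha]
    obtain ⟨hx, h0, h1⟩ := (hN₀ a (v []) ha hb N₀ le_rfl).choose_spec
    exact ⟨hx, h0, by rwa [show N = 1 + N₀ by omega]⟩
  set t : Word k → Fin d := fun w =>
    if w.length ≤ n then u w
    else if w.length ≤ n + N then pth (u (w.take n)) (w.length - n)
    else (succF d M)^[w.length - (n + N + m)] (v ((w.drop (n + N)).take m)) with htdef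
  have tdef1 : ∀ w : Word k, w.length ≤ n → t w = u w := by
    intro w h; rw [htdef]; dsimp only; rw [if_pos h]
  have tdef2 : ∀ w : Word k, n < w.length → w.length ≤ n + N →
      t w = pth (u (w.take n)) (w.length - n) := by
    intro w h1 h2; rw [htdef]; dsimp only; rw [if_neg (by omega), if_pos h2]
  have tdef3 : ∀ w : Word k, n + N < w.length →
      t w = (succF d M)^[w.length - (n + N + m)] (v ((w.drop (n + N)).take m)) := by
    intro w h1; rw [htdef]; dsimp only; rw [if_neg (by omega), if_neg (by omega)]
  have tval2 : ∀ w : Word k, w.length = n + N → t w = v [] := by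
    intro w hw
    rw [tdef2 w (by omega) (by omega)]
    have ha := hadm_u (w.take n) (by rw [List.length_take]; omega)
    rw [show w.length - n = N by omega]
    exact (pth_spec _ ha).2.2
  have htT : t ∈ homTree k (markovShift d M) := by
    rw [mem_homTree_iff hk0]
    intro w i
    have hlen : (w ++ [i]).length = w.length + 1 := by simp
    rcases lt_trichotomy w.length n with hc | hc | hc
    · rw [tdef1 w (by omega), tdef1 (w ++ [i]) (by omega)]
      exact hM_u w i hc
    · rw [tdef1 w (by omega), tdef2 (w ++ [i]) (by omega) (by omega)]
      rw [List.take_left' hc, hlen, hc, show n + 1 - n = 1 by omega]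
      obtain ⟨hx, h0, -⟩ := pth_spec (u w) (hadm_u w (le_of_eq hc))
      simpa [h0] using hx 0
    · rcases lt_trichotomy w.length (n + N) with hc2 | hc2 | hc2
      · rw [tdef2 w (by omega) (by omega), tdef2 (w ++ [i]) (by omega) (by omega)]
        have htake : (w ++ [i]).take n = w.take n := by
          rw [List.take_append, show n - w.length = 0 by omega]
          simp
        rw [htake, hlen, show w.length + 1 - n = (w.length - n) + 1 by omega]
        have ha := hadm_u (w.take n) (by rw [List.length_take]; omega)
        exact (pth_spec _ ha).1 (w.length - n)
      · rw [tval2 w hc2, tdef3 (w ++ [i]) (by omega)]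
        have hdrop : (w ++ [i]).drop (n + N) = [i] := List.drop_left' hc2
        rw [hdrop, hlen]
        rcases Nat.eq_zero_or_pos m with hm | hm
        · subst hm
          rw [show w.length + 1 - (n + N + 0) = 1 by omega]
          simp only [List.take_zero, Function.iterate_one]
          exact (succF_spec hb).1
        · rw [show w.length + 1 - (n + N + m) = 0 by omega,
            Function.iterate_zero_apply,
            List.take_of_length_le (by simp; omega)]
          simpa using hM_v [] i hm
      · rw [tdef3 w (by omega), tdef3 (w ++ [i]) (by omega)]
        have hdrop : (w ++ [i]).drop (n + N) = w.drop (n + N) ++ [i] := by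
          rw [List.drop_append, show n + N - w.length = 0 by omega]
          simp
        have hrl : (w.drop (n + N)).length = w.length - (n + N) := by simp
        rcases lt_or_ge w.length (n + N + m) with hc3 | hc3
        · rw [show w.length - (n + N + m) = 0 by omega, hlen,
            show w.length + 1 - (n + N + m) = 0 by omega,
            Function.iterate_zero_apply, Function.iterate_zero_apply, hdrop,
            List.take_of_length_le (by rw [hrl]; omega),
            List.take_of_length_le (by rw [List.length_append, hrl]; simp; omega)]
          exact hM_v (w.drop (n + N)) i (by rw [hrl]; omega)
        · have htk : ((w.drop (n + N)) ++ [i]).take m = (w.drop (n + N)).take m := by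
            rw [List.take_append,
              show m - (w.drop (n + N)).length = 0 by rw [hrl]; omega]
            simp
          rw [hdrop, htk, hlen,
            show w.length + 1 - (n + N + m) = (w.length - (n + N + m)) + 1 by omega,
            Function.iterate_succ_apply']
          have hay : AdmSym d M (v ((w.drop (n + N)).take m)) :=
            hadm_v _ (by rw [List.length_take]; omega)
          exact (succF_spec (succF_iter_adm hay _)).1
  refine ⟨t, htT, fun z hz => tdef1 z hz, ?_⟩
  intro w hw z hz y hy
  have hzl : z.length = N := hz
  have hwz : (w ++ z).length = n + N := by rw [List.length_append, hw, hzl]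
  rcases Nat.eq_zero_or_pos y.length with hy0 | hy0
  · have hynil : y = [] := List.length_eq_zero_iff.mp hy0
    subst hynil
    rw [List.append_nil]
    exact tval2 _ hwz
  · have hlen3 : (w ++ z ++ y).length = n + N + y.length := by
      rw [List.length_append, hwz]
    rw [tdef3 _ (by rw [hlen3]; omega)]
    have hdrop : (w ++ z ++ y).drop (n + N) = y := List.drop_left' hwz
    rw [hdrop, List.take_of_length_le hy, hlen3,
      show n + N + y.length - (n + N + m) = 0 by omega,
      Function.iterate_zero_apply]

end Aux

/-- For an adjacency matrix `A`: the Markov shift `X_A` is topologically mixing iff the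
hom tree-shift `T_A` is uniform CPC-block gluing. -/
theorem stmt15 {k : ℕ} (hk : 2 ≤ k) (d : ℕ) (M : Matrix (Fin d) (Fin d) Bool) :
    MixingShift (markovShift d M) ↔ CPCUBG (homTree k (markovShift d M)) :=
  ⟨fun h => forward_dir hk h, fun h => backward_dir hk h⟩

end TreeShiftPaper
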